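/- Let Γ=(V,E) be an infinite, locally finite tree and let X_0 : V → ℤ/3ℤ be any initial 3-coloring. For i ∈ ℤ/3ℤ let X_0^{(i)} be the shifted coloring X_0^{(i)}(x) = X_0(x) + i (mod 3). Let α_CCA(X_0) be the activity of the 3-color CCA trajectory started from X_0, and let α_GHM(X_0^{(i)}) be the activity of the 3-color GHM trajectory started from X_0^{(i)}. Then α_CCA(X_0) ≤ α_GHM(X_0^{(0)}) + α_GHM(X_0^{(1)}) + α_GHM(X_0^{(2)}). -/
import Mathlib


noncomputable section
attribute [local instance] Classical.propDecidable

open Filter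

variable {V : Type*}

/-- One step of the 3-color cyclic cellular automaton. -/
def ccaStep (G : SimpleGraph V) (X : V → ZMod 3) : V → ZMod 3 :=
  fun v => if ∃ u, G.Adj v u ∧ X u = X v + 1 then X v + 1 else X v

/-- The CCA trajectory started from `X₀`. -/
def ccaTraj (G : SimpleGraph V) (X₀ : V → ZMod 3) : ℕ → V → ZMod 3 :=
  fun t => (ccaStep G)^[t] X₀

/-- A vertex is excited at time `t` for CCA iff its color advances. -/
def ccaExcited (G : SimpleGraph V) (X₀ : V → ZMod 3) (t : ℕ) (v : V) : Prop :=
  ccaTraj G X₀ (t + 1) v = ccaTraj G X₀ t v + 1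

/-- Number of excitations of `x` at times `0, …, t-1` (CCA). -/
def ccaNe (G : SimpleGraph V) (X₀ : V → ZMod 3) (t : ℕ) (x : V) : ℕ :=
  ((Finset.range t).filter fun s => ccaExcited G X₀ s x).card

/-- One step of the 3-color Greenberg–Hastings model. -/
def ghmStep (G : SimpleGraph V) (X : V → ZMod 3) : V → ZMod 3 :=
  fun v => if X v = 0 then (if ∃ u, G.Adj v u ∧ X u = 1 then 1 else 0) else X v + 1

/-- The GHM trajectory started from `X₀`. -/
def ghmTraj (G : SimpleGraph V) (X₀ : V → ZMod 3) : ℕ → V → ZMod 3 :=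
  fun t => (ghmStep G)^[t] X₀

/-- A vertex is excited at time `t` for GHM iff its color changes from 0 to 1. -/
def ghmExcited (G : SimpleGraph V) (X₀ : V → ZMod 3) (t : ℕ) (v : V) : Prop :=
  ghmTraj G X₀ t v = 0 ∧ ghmTraj G X₀ (t + 1) v = 1

/-- Number of excitations of `x` at times `0, …, t-1` (GHM). -/
def ghmNe (G : SimpleGraph V) (X₀ : V → ZMod 3) (t : ℕ) (x : V) : ℕ :=
  ((Finset.range t).filter fun s => ghmExcited G X₀ s x).card

namespace CcaGhmAux

variable (G : SimpleGraph V) (X₀ : V → ZMod 3)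

lemma cca_succ (t : ℕ) (v : V) :
    ccaTraj G X₀ (t + 1) v =
      if ∃ u, G.Adj v u ∧ ccaTraj G X₀ t u = ccaTraj G X₀ t v + 1
      then ccaTraj G X₀ t v + 1 else ccaTraj G X₀ t v := by
  show (ccaStep G)^[t + 1] X₀ v = _
  rw [Function.iterate_succ_apply']
  rfl

lemma excited_iff (t : ℕ) (v : V) :
    ccaExcited G X₀ t v ↔
      ∃ u, G.Adj v u ∧ ccaTraj G X₀ t u = ccaTraj G X₀ t v + 1 := by
  unfold ccaExcited
  rw [cca_succ]
  by_cases h : ∃ u, G.Adj v u ∧ ccaTraj G X₀ t u = ccaTraj G X₀ t v + 1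
  · simp [h]
  · rw [if_neg h]
    constructor
    · intro hc
      exact absurd hc ((by decide : ∀ a : ZMod 3, a ≠ a + 1) _)
    · intro hc; exact absurd hc h

lemma cca_succ_of_not {t : ℕ} {v : V} (h : ¬ ccaExcited G X₀ t v) :
    ccaTraj G X₀ (t + 1) v = ccaTraj G X₀ t v := by
  rw [cca_succ]
  rw [excited_iff] at h
  exact if_neg h

/-- The phase-`i` excitation predicate. -/
def Q (i : ZMod 3) (t : ℕ) (v : V) : Prop :=
  ccaExcited G X₀ t v ∧ ccaTraj G X₀ t v + i = 0

/-- The auxiliary "refractory" predicate. -/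
def R (i : ZMod 3) : ℕ → V → Prop
  | 0, v => X₀ v + i = 1
  | (t + 1), v => Q G X₀ i t v

/-- The conjectured GHM trajectory with shift `i`, described via CCA excitations. -/
def F (i : ZMod 3) : ℕ → V → ZMod 3
  | 0, v => X₀ v + i
  | (t + 1), v => if Q G X₀ i t v then 1 else if R G X₀ i t v then 2 else 0

lemma R_val {i : ZMod 3} {t : ℕ} {v : V} (h : R G X₀ i t v) :
    ccaTraj G X₀ t v + i = 1 := by
  cases t with
  | zero => exact h
  | succ s =>
    obtain ⟨he, hc⟩ := h
    rw [he, add_right_comm, hc]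
    decide

lemma key_aux {i : ZMod 3} {t : ℕ} {v : V} (hQ : ¬ Q G X₀ i t v)
    (hc : ccaTraj G X₀ (t + 1) v + i = 1)
    (hu : ∃ u, G.Adj v u ∧ Q G X₀ i (t + 1) u) : False := by
  obtain ⟨u, hadj, heu, hcu⟩ := hu
  by_cases hev : ccaExcited G X₀ t v
  · apply hQ
    refine ⟨hev, ?_⟩
    rw [hev, add_right_comm] at hc
    exact (by decide : ∀ a : ZMod 3, a + 1 = 1 → a = 0) _ hc
  · have hcv : ccaTraj G X₀ t v + i = 1 := by
      rwa [cca_succ_of_not G X₀ hev] at hc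
    by_cases heu' : ccaExcited G X₀ t u
    · -- then c t u + i = 2, so c t u = c t v + 1, exciting v : contradiction
      have hcu' : ccaTraj G X₀ t u + i = 2 := by
        rw [heu', add_right_comm] at hcu
        exact (by decide : ∀ a : ZMod 3, a + 1 = 0 → a = 2) _ hcu
      apply hev
      rw [excited_iff]
      refine ⟨u, hadj, ?_⟩
      exact (by decide : ∀ a b i : ZMod 3, a + i = 2 → b + i = 1 → a = b + 1) _ _ _ hcu' hcv
    · -- then c t u + i = 0, so c t v = c t u + 1, exciting u : contradiction
      have hcu' : ccaTraj G X₀ t u + i = 0 := by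
        rwa [cca_succ_of_not G X₀ heu'] at hcu
      apply heu'
      rw [excited_iff]
      refine ⟨v, hadj.symm, ?_⟩
      exact (by decide : ∀ a b i : ZMod 3, a + i = 1 → b + i = 0 → a = b + 1) _ _ _ hcv hcu'

lemma key {i : ZMod 3} {s : ℕ} {v : V} (h1 : ¬ Q G X₀ i s v)
    (h2 : ccaTraj G X₀ s v + i = 1 → (∃ u, G.Adj v u ∧ Q G X₀ i s u) → False) :
    (∃ u, G.Adj v u ∧ Q G X₀ i s u) ↔ Q G X₀ i (s + 1) v := by
  constructor
  · rintro hex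
    obtain ⟨u, hadj, heu, hcu⟩ := hex
    have hcu1 : ccaTraj G X₀ (s + 1) u + i = 1 := by
      rw [heu, add_right_comm, hcu]; decide
    rcases (by decide : ∀ a : ZMod 3, a = 0 ∨ a = 1 ∨ a = 2) (ccaTraj G X₀ s v + i)
      with hv0 | hv1 | hv2
    · -- v has phase 0, not excited at s, so stays; excited at s+1 by u
      have hnev : ¬ ccaExcited G X₀ s v := fun he => h1 ⟨he, hv0⟩
      have hstay := cca_succ_of_not G X₀ hnev
      refine ⟨?_, by rw [hstay]; exact hv0⟩
      rw [excited_iff]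
      refine ⟨u, hadj, ?_⟩
      have hv0' : ccaTraj G X₀ (s + 1) v + i = 0 := by rw [hstay]; exact hv0
      exact (by decide : ∀ a b i : ZMod 3, a + i = 1 → b + i = 0 → a = b + 1) _ _ _ hcu1 hv0'
    · exact absurd (h2 hv1 ⟨u, hadj, heu, hcu⟩) not_false
    · -- v has phase 2, is excited at s by u, becomes phase 0, excited at s+1 by u
      have hev : ccaExcited G X₀ s v := by
        rw [excited_iff]
        exact ⟨u, hadj,
          (by decide : ∀ a b i : ZMod 3, a + i = 0 → b + i = 2 → a = b + 1) _ _ _ hcu hv2⟩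
      have hv0' : ccaTraj G X₀ (s + 1) v + i = 0 := by
        rw [hev, add_right_comm, hv2]; decide
      refine ⟨?_, hv0'⟩
      rw [excited_iff]
      exact ⟨u, hadj,
        (by decide : ∀ a b i : ZMod 3, a + i = 1 → b + i = 0 → a = b + 1) _ _ _ hcu1 hv0'⟩
  · rintro ⟨hev, hcv⟩
    obtain ⟨u, hadj, hcu⟩ := (excited_iff G X₀ (s + 1) v).mp hev
    have hcu1 : ccaTraj G X₀ (s + 1) u + i = 1 := by
      rw [hcu, add_right_comm, hcv]; decide
    by_cases heu : ccaExcited G X₀ s u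
    · refine ⟨u, hadj, heu, ?_⟩
      rw [heu, add_right_comm] at hcu1
      exact (by decide : ∀ a : ZMod 3, a + 1 = 1 → a = 0) _ hcu1
    · exfalso
      have hcu' : ccaTraj G X₀ s u + i = 1 := by
        rwa [cca_succ_of_not G X₀ heu] at hcu1
      by_cases hev' : ccaExcited G X₀ s v
      · -- c s v + i = 2 = (c s u + i) + 1, so u is excited at s : contradiction
        have hcv' : ccaTraj G X₀ s v + i = 2 := by
          rw [hev', add_right_comm] at hcv
          exact (by decide : ∀ a : ZMod 3, a + 1 = 0 → a = 2) _ hcv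
        apply heu
        rw [excited_iff]
        exact ⟨v, hadj.symm,
          (by decide : ∀ a b i : ZMod 3, a + i = 2 → b + i = 1 → a = b + 1) _ _ _ hcv' hcu'⟩
      · -- c s v + i = 0 and c s u + i = 1, so v is excited at s : contradiction
        have hcv' : ccaTraj G X₀ s v + i = 0 := by
          rwa [cca_succ_of_not G X₀ hev'] at hcv
        apply hev'
        rw [excited_iff]
        exact ⟨u, hadj,
          (by decide : ∀ a b i : ZMod 3, a + i = 1 → b + i = 0 → a = b + 1) _ _ _ hcu' hcv'⟩

lemma h2_of_notR {i : ZMod 3} {t : ℕ} {v : V} (hR : ¬ R G X₀ i t v) :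
    ccaTraj G X₀ t v + i = 1 → (∃ u, G.Adj v u ∧ Q G X₀ i t u) → False := by
  cases t with
  | zero => intro hc _; exact hR hc
  | succ s => exact fun hc hu => key_aux G X₀ hR hc hu

lemma ghm_succ (Y : V → ZMod 3) (t : ℕ) (v : V) :
    ghmTraj G Y (t + 1) v = ghmStep G (ghmTraj G Y t) v := by
  show (ghmStep G)^[t + 1] Y v = _
  rw [Function.iterate_succ_apply']
  rfl

lemma coupling (i : ZMod 3) : ∀ t, ghmTraj G (fun v => X₀ v + i) t = F G X₀ i t := by
  intro t
  induction t with
  | zero => rfl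
  | succ t ih =>
    funext v
    rw [ghm_succ, ih]
    cases t with
    | zero =>
      show (if X₀ v + i = 0 then
          (if ∃ u, G.Adj v u ∧ X₀ u + i = 1 then (1 : ZMod 3) else 0) else X₀ v + i + 1) =
        if Q G X₀ i 0 v then 1 else if R G X₀ i 0 v then 2 else 0
      have hQ0 : Q G X₀ i 0 v ↔ ccaExcited G X₀ 0 v ∧ X₀ v + i = 0 := Iff.rfl
      rcases (by decide : ∀ a : ZMod 3, a = 0 ∨ a = 1 ∨ a = 2) (X₀ v + i) with h0 | h1 | h2
      · rw [if_pos h0]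
        have hiff : (∃ u, G.Adj v u ∧ X₀ u + i = 1) ↔ ccaExcited G X₀ 0 v := by
          rw [excited_iff]
          constructor
          · rintro ⟨u, hadj, hu⟩
            exact ⟨u, hadj,
              (by decide : ∀ a b i : ZMod 3, a + i = 1 → b + i = 0 → a = b + 1) _ _ _ hu h0⟩
          · rintro ⟨u, hadj, hu⟩
            refine ⟨u, hadj, ?_⟩
            have hu' : X₀ u = X₀ v + 1 := hu
            rw [hu', add_right_comm, h0]; decide
        by_cases he : ccaExcited G X₀ 0 v
        · rw [if_pos (hiff.mpr he), if_pos (hQ0.mpr ⟨he, h0⟩)]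
        · rw [if_neg (fun h => he (hiff.mp h)), if_neg (fun h => he (hQ0.mp h).1),
            if_neg (show ¬ R G X₀ i 0 v from fun hr => by
              rw [show R G X₀ i 0 v = (X₀ v + i = 1) from rfl] at hr
              rw [h0] at hr; exact absurd hr (by decide))]
      · rw [if_neg (by rw [h1]; decide), h1]
        rw [if_neg (fun h : Q G X₀ i 0 v => by
          have := h.2; rw [show ccaTraj G X₀ 0 v = X₀ v from rfl, h1] at this
          exact absurd this (by decide))]
        rw [if_pos (show R G X₀ i 0 v from h1)]
        decide
      · rw [if_neg (by rw [h2]; decide), h2]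
        rw [if_neg (fun h : Q G X₀ i 0 v => by
          have := h.2; rw [show ccaTraj G X₀ 0 v = X₀ v from rfl, h2] at this
          exact absurd this (by decide))]
        rw [if_neg (show ¬ R G X₀ i 0 v from fun hr => by
          rw [show R G X₀ i 0 v = (X₀ v + i = 1) from rfl, h2] at hr
          exact absurd hr (by decide))]
        decide
    | succ t =>
      show (if F G X₀ i (t + 1) v = 0 then
          (if ∃ u, G.Adj v u ∧ F G X₀ i (t + 1) u = 1 then (1 : ZMod 3) else 0)
          else F G X₀ i (t + 1) v + 1) =
        if Q G X₀ i (t + 1) v then 1 else if R G X₀ i (t + 1) v then 2 else 0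
      have hFdef : ∀ w, F G X₀ i (t + 1) w =
          if Q G X₀ i t w then 1 else if R G X₀ i t w then 2 else 0 := fun w => rfl
      have hRdef : R G X₀ i (t + 1) v ↔ Q G X₀ i t v := Iff.rfl
      by_cases hQ : Q G X₀ i t v
      · -- current value 1, advances to 2
        have hF1 : F G X₀ i (t + 1) v = 1 := by rw [hFdef, if_pos hQ]
        rw [hF1, if_neg (by decide : ¬ (1 : ZMod 3) = 0)]
        have hnQ : ¬ Q G X₀ i (t + 1) v := by
          rintro ⟨-, hc⟩
          rw [hQ.1, add_right_comm, hQ.2] at hc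
          exact absurd hc (by decide)
        rw [if_neg hnQ, if_pos (hRdef.mpr hQ)]
        decide
      · by_cases hR : R G X₀ i t v
        · -- current value 2, advances to 0
          have hF2 : F G X₀ i (t + 1) v = 2 := by rw [hFdef, if_neg hQ, if_pos hR]
          rw [hF2, if_neg (by decide : ¬ (2 : ZMod 3) = 0)]
          have hc1 : ccaTraj G X₀ t v + i = 1 := R_val G X₀ hR
          have hnQ : ¬ Q G X₀ i (t + 1) v := by
            rintro ⟨-, hc⟩
            by_cases he : ccaExcited G X₀ t v
            · rw [he, add_right_comm, hc1] at hc
              exact absurd hc (by decide)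
            · rw [cca_succ_of_not G X₀ he, hc1] at hc
              exact absurd hc (by decide)
          rw [if_neg hnQ, if_neg (fun h => hQ (hRdef.mp h))]
          decide
        · -- current value 0
          have hF0 : F G X₀ i (t + 1) v = 0 := by rw [hFdef, if_neg hQ, if_neg hR]
          rw [hF0, if_pos rfl]
          have hone : ∀ u, F G X₀ i (t + 1) u = 1 ↔ Q G X₀ i t u := by
            intro u
            rw [hFdef]
            by_cases h : Q G X₀ i t u
            · simp [h]
            · rw [if_neg h]
              by_cases h' : R G X₀ i t u
              · rw [if_pos h']
                exact ⟨fun hc => absurd hc (by decide), fun hc => absurd hc h⟩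
              · rw [if_neg h']
                exact ⟨fun hc => absurd hc (by decide), fun hc => absurd hc h⟩
          have hiff : (∃ u, G.Adj v u ∧ F G X₀ i (t + 1) u = 1) ↔ Q G X₀ i (t + 1) v := by
            rw [← key G X₀ hQ (h2_of_notR G X₀ hR)]
            constructor
            · rintro ⟨u, hadj, hu⟩; exact ⟨u, hadj, (hone u).mp hu⟩
            · rintro ⟨u, hadj, hu⟩; exact ⟨u, hadj, (hone u).mpr hu⟩
          by_cases hQ' : Q G X₀ i (t + 1) v
          · rw [if_pos (hiff.mpr hQ'), if_pos hQ']
          · rw [if_neg (fun h => hQ' (hiff.mp h)), if_neg hQ',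
              if_neg (fun h => hQ (hRdef.mp h))]

lemma F_eq_one_iff (i : ZMod 3) (t : ℕ) (v : V) :
    F G X₀ i (t + 1) v = 1 ↔ Q G X₀ i t v := by
  show (if Q G X₀ i t v then (1 : ZMod 3) else if R G X₀ i t v then 2 else 0) = 1 ↔ _
  by_cases h : Q G X₀ i t v
  · simp [h]
  · rw [if_neg h]
    by_cases h' : R G X₀ i t v
    · rw [if_pos h']
      exact ⟨fun hc => absurd hc (by decide), fun hc => absurd hc h⟩
    · rw [if_neg h']
      exact ⟨fun hc => absurd hc (by decide), fun hc => absurd hc h⟩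

lemma ghm_zero_of_succ_one (Y : V → ZMod 3) (t : ℕ) (v : V)
    (h : ghmTraj G Y (t + 1) v = 1) : ghmTraj G Y t v = 0 := by
  rw [ghm_succ] at h
  by_cases h0 : ghmTraj G Y t v = 0
  · exact h0
  · exfalso
    rw [show ghmStep G (ghmTraj G Y t) v =
        if ghmTraj G Y t v = 0 then
          (if ∃ u, G.Adj v u ∧ ghmTraj G Y t u = 1 then 1 else 0)
        else ghmTraj G Y t v + 1 from rfl, if_neg h0] at h
    exact h0 ((by decide : ∀ a : ZMod 3, a + 1 = 1 → a = 0) _ h)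

lemma ghmExcited_iff (i : ZMod 3) (t : ℕ) (v : V) :
    ghmExcited G (fun w => X₀ w + i) t v ↔ Q G X₀ i t v := by
  unfold ghmExcited
  constructor
  · rintro ⟨-, h⟩
    rw [coupling G X₀ i (t + 1)] at h
    exact (F_eq_one_iff G X₀ i t v).mp h
  · intro hQ
    have h1 : ghmTraj G (fun w => X₀ w + i) (t + 1) v = 1 := by
      rw [coupling G X₀ i (t + 1)]
      exact (F_eq_one_iff G X₀ i t v).mpr hQ
    exact ⟨ghm_zero_of_succ_one G _ t v h1, h1⟩

lemma ne_le (t : ℕ) (x : V) :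
    ccaNe G X₀ t x ≤ ∑ i : ZMod 3, ghmNe G (fun v => X₀ v + i) t x := by
  unfold ccaNe ghmNe
  have hsub : ((Finset.range t).filter fun s => ccaExcited G X₀ s x) ⊆
      Finset.univ.biUnion (fun i : ZMod 3 =>
        (Finset.range t).filter fun s => ghmExcited G (fun v => X₀ v + i) s x) := by
    intro s hs
    rw [Finset.mem_filter] at hs
    obtain ⟨hr, he⟩ := hs
    refine Finset.mem_biUnion.mpr ⟨-(ccaTraj G X₀ s x), Finset.mem_univ _, ?_⟩
    rw [Finset.mem_filter]
    exact ⟨hr, (ghmExcited_iff G X₀ _ s x).mpr ⟨he, by ring⟩⟩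
  calc ((Finset.range t).filter fun s => ccaExcited G X₀ s x).card
      ≤ (Finset.univ.biUnion (fun i : ZMod 3 =>
          (Finset.range t).filter fun s => ghmExcited G (fun v => X₀ v + i) s x)).card :=
        Finset.card_le_card hsub
    _ ≤ _ := Finset.card_biUnion_le

lemma limsup_sum_le {ι : Type*} (s : Finset ι) (f : ι → ℕ → ℝ)
    (h0 : ∀ i ∈ s, ∀ t, 0 ≤ f i t) (h1 : ∀ i ∈ s, ∀ t, f i t ≤ 1) :
    limsup (fun t => ∑ i ∈ s, f i t) atTop ≤ ∑ i ∈ s, limsup (fun t => f i t) atTop := by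
  classical
  induction s using Finset.induction with
  | empty => simp
  | @insert a s ha ih =>
    have hsum : (fun t => ∑ i ∈ insert a s, f i t) = f a + fun t => ∑ i ∈ s, f i t := by
      funext t
      simp [Finset.sum_insert ha]
    rw [hsum, Finset.sum_insert ha]
    have hb1 : IsBoundedUnder (· ≥ ·) atTop (f a) :=
      isBoundedUnder_of ⟨0, fun t => h0 a (Finset.mem_insert_self a s) t⟩
    have hb2 : IsBoundedUnder (· ≤ ·) atTop (f a) :=
      isBoundedUnder_of ⟨1, fun t => h1 a (Finset.mem_insert_self a s) t⟩
    have hb4 : IsBoundedUnder (· ≤ ·) atTop (fun t => ∑ i ∈ s, f i t) :=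
      isBoundedUnder_of ⟨(s.card : ℝ), fun t => by
        calc ∑ i ∈ s, f i t ≤ ∑ _i ∈ s, (1 : ℝ) :=
              Finset.sum_le_sum fun i hi => h1 i (Finset.mem_insert_of_mem hi) t
          _ = s.card := by simp⟩
    have hb3 : IsCoboundedUnder (· ≤ ·) atTop (fun t => ∑ i ∈ s, f i t) :=
      (isBoundedUnder_of ⟨0, fun t =>
        Finset.sum_nonneg fun i hi => h0 i (Finset.mem_insert_of_mem hi) t⟩ :
          IsBoundedUnder (· ≥ ·) atTop _).isCoboundedUnder_flip
    calc limsup (f a + fun t => ∑ i ∈ s, f i t) atTop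
        ≤ limsup (f a) atTop + limsup (fun t => ∑ i ∈ s, f i t) atTop :=
          limsup_add_le hb1 hb2 hb3 hb4
      _ ≤ limsup (f a) atTop + ∑ i ∈ s, limsup (fun t => f i t) atTop := by
          gcongr
          exact ih (fun i hi => h0 i (Finset.mem_insert_of_mem hi))
            (fun i hi => h1 i (Finset.mem_insert_of_mem hi))

end CcaGhmAux

/-- On an infinite, locally finite tree, the CCA activity of an initial coloring is at
most the sum of the GHM activities of its three color shifts. -/
theorem cca_activity_le_sum_of_shifted_ghm_activities [Infinite V]
    (G : SimpleGraph V) (htree : G.IsTree)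
    (hlf : ∀ v : V, (G.neighborSet v).Finite)
    (X₀ : V → ZMod 3) (x₀ : V) :
    limsup (fun t : ℕ => (ccaNe G X₀ t x₀ : ℝ) / t) atTop ≤
      ∑ i : ZMod 3,
        limsup (fun t : ℕ => (ghmNe G (fun v => X₀ v + i) t x₀ : ℝ) / t) atTop := by
  set b : ZMod 3 → ℕ → ℝ := fun i t => (ghmNe G (fun v => X₀ v + i) t x₀ : ℝ) / t with hb
  have hb0 : ∀ i ∈ (Finset.univ : Finset (ZMod 3)), ∀ t, 0 ≤ b i t := by
    intro i _ t
    positivity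
  have hbcard : ∀ (Y : V → ZMod 3) (t : ℕ), ghmNe G Y t x₀ ≤ t := fun Y t =>
    le_trans (Finset.card_filter_le _ _) (by simp)
  have hb1 : ∀ i ∈ (Finset.univ : Finset (ZMod 3)), ∀ t, b i t ≤ 1 := by
    intro i _ t
    rcases Nat.eq_zero_or_pos t with rfl | ht
    · simp [hb]
    · rw [hb]
      rw [div_le_one (by exact_mod_cast ht)]
      exact_mod_cast hbcard _ t
  have hpt : ∀ t : ℕ, (ccaNe G X₀ t x₀ : ℝ) / t ≤ ∑ i : ZMod 3, b i t := by
    intro t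
    rw [hb, ← Finset.sum_div]
    gcongr
    · exact_mod_cast CcaGhmAux.ne_le G X₀ t x₀
  calc limsup (fun t : ℕ => (ccaNe G X₀ t x₀ : ℝ) / t) atTop
      ≤ limsup (fun t : ℕ => ∑ i : ZMod 3, b i t) atTop := by
        refine limsup_le_limsup (Eventually.of_forall hpt) ?_ ?_
        · exact (isBoundedUnder_of ⟨0, fun t => by positivity⟩ :
            IsBoundedUnder (· ≥ ·) atTop _).isCoboundedUnder_flip
        · exact isBoundedUnder_of ⟨3, fun t => by
            calc ∑ i : ZMod 3, b i t ≤ ∑ _i : ZMod 3, (1 : ℝ) :=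
                  Finset.sum_le_sum fun i hi => hb1 i hi t
              _ = 3 := by simp⟩
    _ ≤ ∑ i : ZMod 3, limsup (fun t => b i t) atTop :=
        CcaGhmAux.limsup_sum_le Finset.univ b hb0 hb1
    _ = _ := rfl
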